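/- Let 0 < p, q < 1. Denote the generators of P(D_p) by x, x* and of P(D_q) by y, y*, and let φ_p : P(D_p) → ℂ[a, a⁻¹] and φ_q : P(D_q) → ℂ[a, a⁻¹] be the unique unital algebra homomorphisms with φ_p(x) = a, φ_p(x*) = a⁻¹, φ_q(y) = a, φ_q(y*) = a⁻¹. Then the unique unital algebra homomorphism F : P(S²_{pqφ}) → P(D_p) × P(D_q) with F(f₁) = (x, y), F(f₋₁) = (x*, y*), F(f₀) = (x x*, 1) is injective, and its image equals the fibered product P(D_p) ⊕_φ P(D_q) = { (f, g) ∈ P(D_p) × P(D_q) : φ_p(f) = φ_q(g) }. In particular, P(S²_{pqφ}) is isomorphic as an algebra to P(D_p) ⊕_φ P(D_q). -/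

import Mathlib

noncomputable section

/-- The free algebra ℂ⟨x, x*⟩ on two generators (generator 0 is `x`, generator 1 is `x*`). -/
abbrev FreeDisc : Type := FreeAlgebra ℂ (Fin 2)

/-- The defining relation of the quantum disc: x* x = q x x* + (1 - q)·1. -/
def discRel (q : ℝ) : FreeDisc → FreeDisc → Prop := fun a b =>
  a = FreeAlgebra.ι ℂ (1 : Fin 2) * FreeAlgebra.ι ℂ (0 : Fin 2) ∧
  b = (q : ℂ) • (FreeAlgebra.ι ℂ (0 : Fin 2) * FreeAlgebra.ι ℂ (1 : Fin 2)) +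
      ((1 : ℂ) - (q : ℂ)) • 1

/-- The polynomial quantum disc algebra P(D_q). -/
abbrev QDisc (q : ℝ) : Type := RingQuot (discRel q)

/-- The generator x of P(D_q). -/
def xq (q : ℝ) : QDisc q := RingQuot.mkAlgHom ℂ (discRel q) (FreeAlgebra.ι ℂ 0)

/-- The generator x* of P(D_q). -/
def xsq (q : ℝ) : QDisc q := RingQuot.mkAlgHom ℂ (discRel q) (FreeAlgebra.ι ℂ 1)

/-- The free algebra ℂ⟨f₁, f₋₁, f₀⟩ (generator 0 is f₁, generator 1 is f₋₁,
generator 2 is f₀). -/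
abbrev FreeSphere : Type := FreeAlgebra ℂ (Fin 3)

/-- f₁ in the free algebra. -/
def F1 : FreeSphere := FreeAlgebra.ι ℂ 0
/-- f₋₁ in the free algebra. -/
def Fm1 : FreeSphere := FreeAlgebra.ι ℂ 1
/-- f₀ in the free algebra. -/
def F0 : FreeSphere := FreeAlgebra.ι ℂ 2

/-- The defining relations of P(S²_{pqφ}). -/
inductive sphereRel (p q : ℝ) : FreeSphere → FreeSphere → Prop
  | rel1 : sphereRel p q (Fm1 * F1)
      ((q : ℂ) • (F1 * Fm1) + ((p : ℂ) - (q : ℂ)) • F0 + ((1 : ℂ) - (p : ℂ)) • 1)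
  | rel2 : sphereRel p q (F0 * F1) ((p : ℂ) • (F1 * F0) + ((1 : ℂ) - (p : ℂ)) • F1)
  | rel3 : sphereRel p q (Fm1 * F0) ((p : ℂ) • (F0 * Fm1) + ((1 : ℂ) - (p : ℂ)) • Fm1)
  | rel4 : sphereRel p q ((1 - F0) * (F1 * Fm1 - F0)) 0

/-- The polynomial algebra P(S²_{pqφ}). -/
abbrev QSphere (p q : ℝ) : Type := RingQuot (sphereRel p q)

/-- The generator f₁ of P(S²_{pqφ}). -/
def f1 (p q : ℝ) : QSphere p q := RingQuot.mkAlgHom ℂ (sphereRel p q) F1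
/-- The generator f₋₁ of P(S²_{pqφ}). -/
def fm1 (p q : ℝ) : QSphere p q := RingQuot.mkAlgHom ℂ (sphereRel p q) Fm1
/-- The generator f₀ of P(S²_{pqφ}). -/
def f0 (p q : ℝ) : QSphere p q := RingQuot.mkAlgHom ℂ (sphereRel p q) F0

namespace SphereAux
open Finsupp

abbrev V : Type := ℕ →₀ ℂ

/-- shift-up operator -/
def Xop : Module.End ℂ V := Finsupp.lmapDomain ℂ ℂ (· + 1)

/-- lowering operator with weights 1 - t^k -/
def Sop (t : ℝ) : Module.End ℂ V :=
  Finsupp.lsum ℂ (fun k => ((1 - (t : ℂ) ^ k) • Finsupp.lsingle (k - 1)))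

lemma Xop_single (k : ℕ) (b : ℂ) : Xop (Finsupp.single k b) = Finsupp.single (k + 1) b := by
  simp [Xop, Finsupp.lmapDomain_apply, Finsupp.mapDomain_single]

lemma Sop_single (t : ℝ) (k : ℕ) (b : ℂ) :
    Sop t (Finsupp.single k b) = (1 - (t : ℂ) ^ k) • Finsupp.single (k - 1) b := by
  simp [Sop]

lemma disc_rel_End (t : ℝ) :
    Sop t * Xop = (t : ℂ) • (Xop * Sop t) + ((1 : ℂ) - (t : ℂ)) • 1 := by
  apply Finsupp.lhom_ext
  intro k b
  simp only [Module.End.mul_apply, LinearMap.add_apply, LinearMap.smul_apply,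
    Module.End.one_apply, Xop_single, Sop_single]
  rw [Nat.add_sub_cancel]
  cases k with
  | zero =>
    simp [pow_zero]
  | succ k =>
    rw [Nat.succ_sub_one, map_smul, Xop_single, smul_smul, ← add_smul]
    congr 1
    ring

/-- The representation of the quantum disc algebra on `ℕ →₀ ℂ`. -/
def rep (t : ℝ) : QDisc t →ₐ[ℂ] Module.End ℂ V :=
  RingQuot.liftAlgHom ℂ ⟨FreeAlgebra.lift ℂ ![Xop, Sop t], by
    rintro x y ⟨rfl, rfl⟩
    simp only [map_add, map_mul, map_smul, FreeAlgebra.lift_ι_apply, map_one]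
    simpa using disc_rel_End t⟩

lemma rep_x (t : ℝ) : rep t (xq t) = Xop := by
  simp [rep, xq, RingQuot.liftAlgHom_mkAlgHom_apply, FreeAlgebra.lift_ι_apply]

lemma rep_xs (t : ℝ) : rep t (xsq t) = Sop t := by
  simp [rep, xsq, RingQuot.liftAlgHom_mkAlgHom_apply, FreeAlgebra.lift_ι_apply]

lemma Xop_pow (a k : ℕ) (b : ℂ) :
    (Xop ^ a) (Finsupp.single k b) = Finsupp.single (k + a) b := by
  induction a generalizing k with
  | zero => simp
  | succ a ih => rw [pow_succ, Module.End.mul_apply, Xop_single, ih, Nat.add_assoc, Nat.add_comm 1 a]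

lemma Sop_pow (t : ℝ) (c k : ℕ) (b : ℂ) :
    (Sop t ^ c) (Finsupp.single k b) =
      (∏ j ∈ Finset.range c, (1 - (t : ℂ) ^ (k - j))) • Finsupp.single (k - c) b := by
  induction c generalizing k with
  | zero => simp
  | succ c ih =>
    rw [pow_succ, Module.End.mul_apply, Sop_single, map_smul, ih, smul_smul,
      Finset.prod_range_succ']
    have hp : ∏ j ∈ Finset.range c, (1 - (t:ℂ) ^ (k - 1 - j)) =
        ∏ j ∈ Finset.range c, (1 - (t:ℂ) ^ (k - (j + 1))) :=
      Finset.prod_congr rfl fun j _ => by rw [Nat.sub_sub, Nat.add_comm]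
    congr 1
    · rw [hp, Nat.sub_zero, mul_comm]
    · rw [Nat.sub_sub, Nat.add_comm]

lemma XSop_single (t : ℝ) (k : ℕ) (b : ℂ) :
    (Xop * Sop t) (Finsupp.single k b) = (1 - (t : ℂ) ^ k) • Finsupp.single k b := by
  rw [Module.End.mul_apply, Sop_single, map_smul, Xop_single]
  cases k with
  | zero => simp
  | succ k => rw [Nat.succ_sub_one]

lemma XSop_pow (t : ℝ) (n k : ℕ) (b : ℂ) :
    ((Xop * Sop t) ^ n) (Finsupp.single k b) =
      ((1 - (t : ℂ) ^ k) ^ n) • Finsupp.single k b := by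
  induction n with
  | zero => simp
  | succ n ih =>
    rw [pow_succ, Module.End.mul_apply, XSop_single, map_smul, ih, smul_smul, ← pow_succ']

/-- coefficient of the monomial action -/
def coefP (t : ℝ) (b c k : ℕ) : ℂ :=
  (∏ j ∈ Finset.range c, (1 - (t : ℂ) ^ (k - j))) * (1 - (t : ℂ) ^ (k - c)) ^ b

lemma mono_eval (t : ℝ) (a b c k : ℕ) :
    rep t ((xq t) ^ a * (xq t * xsq t) ^ b * (xsq t) ^ c) (Finsupp.single k 1) =
      (coefP t b c k) • Finsupp.single (k - c + a) 1 := by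
  simp only [map_mul, map_pow, rep_x, rep_xs, Module.End.mul_apply]
  rw [Sop_pow, map_smul, XSop_pow, map_smul, map_smul, Xop_pow, smul_smul, coefP]

end SphereAux

namespace SphereAux
section Idents
variable (p q : ℝ)

lemma id1 : fm1 p q * f1 p q =
    (q:ℂ) • (f1 p q * fm1 p q) + ((p:ℂ)-(q:ℂ)) • f0 p q + ((1:ℂ)-(p:ℂ)) • 1 := by
  have h := RingQuot.mkAlgHom_rel ℂ (sphereRel.rel1 (p := p) (q := q))
  simpa only [map_mul, map_add, map_smul, map_one, f0, f1, fm1] using h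

lemma id2 : f0 p q * f1 p q = (p:ℂ) • (f1 p q * f0 p q) + ((1:ℂ)-(p:ℂ)) • f1 p q := by
  have h := RingQuot.mkAlgHom_rel ℂ (sphereRel.rel2 (p := p) (q := q))
  simpa only [map_mul, map_add, map_smul, map_one, f0, f1] using h

lemma id3 : fm1 p q * f0 p q = (p:ℂ) • (f0 p q * fm1 p q) + ((1:ℂ)-(p:ℂ)) • fm1 p q := by
  have h := RingQuot.mkAlgHom_rel ℂ (sphereRel.rel3 (p := p) (q := q))
  simpa only [map_mul, map_add, map_smul, map_one, f0, fm1] using h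

lemma id4 : ((1:QSphere p q) - f0 p q) * (f1 p q * fm1 p q - f0 p q) = 0 := by
  have h := RingQuot.mkAlgHom_rel ℂ (sphereRel.rel4 (p := p) (q := q))
  simpa only [map_mul, map_sub, map_one, map_zero, f0, f1, fm1] using h

lemma d1 (hp : (p:ℂ) ≠ 0) : f0 p q * fm1 p q =
    (p:ℂ)⁻¹ • (fm1 p q * f0 p q) - ((p:ℂ)⁻¹ * ((1:ℂ)-(p:ℂ))) • fm1 p q := by
  rw [id3]
  match_scalars <;> field_simp <;> ring

lemma comm_w : f0 p q * (f1 p q * fm1 p q) = (f1 p q * fm1 p q) * f0 p q := by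
  rw [← mul_assoc, id2, mul_assoc (f1 p q) (fm1 p q) (f0 p q), id3]
  simp only [add_mul, mul_add, smul_mul_assoc, mul_smul_comm, mul_assoc]

lemma fid : f0 p q * (f1 p q * fm1 p q) =
    f1 p q * fm1 p q - f0 p q + f0 p q * f0 p q := by
  have h := id4 p q
  rw [sub_mul, one_mul, mul_sub] at h
  exact sub_eq_iff_eq_add.mp (sub_eq_zero.mp h).symm

lemma wmul : (f1 p q * fm1 p q) * f0 p q =
    f1 p q * fm1 p q - f0 p q + f0 p q * f0 p q := by
  rw [← comm_w, fid]

lemma wpow (b : ℕ) : (f1 p q * fm1 p q) * f0 p q ^ b =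
    f1 p q * fm1 p q + (f0 p q ^ (b+1) - f0 p q) := by
  induction b with
  | zero => simp
  | succ b ih =>
    rw [pow_succ, ← mul_assoc, ih, add_mul, sub_mul, wmul, ← pow_succ]
    abel

lemma L1 (c : ℕ) : fm1 p q ^ c * f0 p q =
    ((p:ℂ)^c) • (f0 p q * fm1 p q ^ c) + ((1:ℂ) - (p:ℂ)^c) • fm1 p q ^ c := by
  induction c with
  | zero => simp
  | succ c ih =>
    rw [pow_succ', mul_assoc, ih, mul_add, mul_smul_comm, mul_smul_comm, ← mul_assoc, id3]
    simp only [add_mul, smul_mul_assoc, smul_add, smul_smul, mul_assoc, ← pow_succ']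
    match_scalars <;> ring

end Idents
end SphereAux

namespace SphereAux
section Span
variable (p q : ℝ)

/-- normal monomials -/
def mono (a b c : ℕ) : QSphere p q := f1 p q ^ a * f0 p q ^ b * fm1 p q ^ c

/-- the spanning family: constrained monomials -/
def vB (i : ℕ × ℕ × ℕ) : QSphere p q :=
  if i.2.1 = 0 ∨ i.1 = 0 ∨ i.2.2 = 0 then mono p q i.1 i.2.1 i.2.2 else 0

def Q : Submodule ℂ (QSphere p q) := Submodule.span ℂ (Set.range (vB p q))

lemma mem_Q_of (a b c : ℕ) (h : b = 0 ∨ a = 0 ∨ c = 0) : mono p q a b c ∈ Q p q := by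
  have hv : vB p q (a, b, c) = mono p q a b c := by simp only [vB, if_pos h]
  rw [← hv]
  exact Submodule.subset_span ⟨(a, b, c), rfl⟩

def U1 : Submodule ℂ (QSphere p q) :=
  Submodule.span ℂ (Set.range fun j : ℕ => f1 p q * f0 p q ^ j)

def U2 : Submodule ℂ (QSphere p q) :=
  Submodule.span ℂ (Set.range fun j : ℕ => fm1 p q * f0 p q ^ j)

lemma U1_mul_f0 {z : QSphere p q} (h : z ∈ U1 p q) : z * f0 p q ∈ U1 p q := by
  induction h using Submodule.span_induction with
  | mem x hx =>
    obtain ⟨j, rfl⟩ := hx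
    rw [mul_assoc, ← pow_succ]
    exact Submodule.subset_span ⟨j+1, rfl⟩
  | zero => rw [zero_mul]; exact zero_mem _
  | add x y hx hy ihx ihy => rw [add_mul]; exact add_mem ihx ihy
  | smul a x hx ihx => rw [smul_mul_assoc]; exact Submodule.smul_mem _ _ ihx

lemma U2_mul_f0 {z : QSphere p q} (h : z ∈ U2 p q) : z * f0 p q ∈ U2 p q := by
  induction h using Submodule.span_induction with
  | mem x hx =>
    obtain ⟨j, rfl⟩ := hx
    rw [mul_assoc, ← pow_succ]
    exact Submodule.subset_span ⟨j+1, rfl⟩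
  | zero => rw [zero_mul]; exact zero_mem _
  | add x y hx hy ihx ihy => rw [add_mul]; exact add_mem ihx ihy
  | smul a x hx ihx => rw [smul_mul_assoc]; exact Submodule.smul_mem _ _ ihx

lemma L3 (b : ℕ) : f0 p q ^ b * f1 p q ∈ U1 p q := by
  induction b with
  | zero =>
    rw [pow_zero, one_mul]
    exact Submodule.subset_span ⟨0, by simp⟩
  | succ b ih =>
    rw [pow_succ, mul_assoc, id2, mul_add, mul_smul_comm, mul_smul_comm, ← mul_assoc]
    exact add_mem (Submodule.smul_mem _ _ (U1_mul_f0 p q ih)) (Submodule.smul_mem _ _ ih)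

lemma L3' (hp : (p:ℂ) ≠ 0) (b : ℕ) : f0 p q ^ b * fm1 p q ∈ U2 p q := by
  induction b with
  | zero =>
    rw [pow_zero, one_mul]
    exact Submodule.subset_span ⟨0, by simp⟩
  | succ b ih =>
    rw [pow_succ, mul_assoc, d1 p q hp, mul_sub, mul_smul_comm, mul_smul_comm, ← mul_assoc]
    exact sub_mem (Submodule.smul_mem _ _ (U2_mul_f0 p q ih)) (Submodule.smul_mem _ _ ih)

lemma mono_mem (hp : (p:ℂ) ≠ 0) : ∀ a b c, mono p q a b c ∈ Q p q := by
  intro a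
  induction a with
  | zero => exact fun b c => mem_Q_of p q 0 b c (Or.inr (Or.inl rfl))
  | succ a ih =>
    intro b c
    cases c with
    | zero => exact mem_Q_of p q (a+1) b 0 (Or.inr (Or.inr rfl))
    | succ c =>
      have key : mono p q (a+1) b (c+1)
          = f1 p q ^ (a+1) * ((f0 p q ^ b * fm1 p q) * fm1 p q ^ c) := by
        rw [mono, pow_succ' (fm1 p q) c]
        simp only [mul_assoc]
      rw [key]
      have h2 := L3' p q hp b
      refine Submodule.span_induction
        (p := fun z _ => f1 p q ^ (a+1) * (z * fm1 p q ^ c) ∈ Q p q) ?_ ?_ ?_ ?_ h2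
      · rintro x ⟨j, rfl⟩
        have e : f1 p q ^ (a+1) * ((fm1 p q * f0 p q ^ j) * fm1 p q ^ c)
            = f1 p q ^ a * (((f1 p q * fm1 p q) * f0 p q ^ j) * fm1 p q ^ c) := by
          rw [pow_succ]
          simp only [mul_assoc]
        rw [e, wpow]
        have e3 : f1 p q ^ a * ((f1 p q * fm1 p q + (f0 p q ^ (j+1) - f0 p q)) * fm1 p q ^ c)
            = mono p q (a+1) 0 (c+1) + (mono p q a (j+1) c - mono p q a 1 c) := by
          simp only [mono, add_mul, sub_mul, mul_add, mul_sub, pow_zero, pow_one, one_mul,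
            mul_one, ← pow_succ', pow_succ]
          simp only [mul_assoc]
          rw [← pow_succ', pow_succ]
        rw [e3]
        exact add_mem (mem_Q_of p q (a+1) 0 (c+1) (Or.inl rfl))
          (sub_mem (ih (j+1) c) (ih 1 c))
      · simp only [zero_mul, mul_zero]; exact zero_mem _
      · intro x y hx hy ihx ihy
        simp only [add_mul, mul_add]; exact add_mem ihx ihy
      · intro s x hx ihx
        simp only [smul_mul_assoc, mul_smul_comm]; exact Submodule.smul_mem _ _ ihx

lemma mono_mul_fm1 (hp : (p:ℂ) ≠ 0) (a b c : ℕ) :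
    mono p q a b c * fm1 p q ∈ Q p q := by
  have e : mono p q a b c * fm1 p q = mono p q a b (c+1) := by
    rw [mono, mono, pow_succ]
    simp only [mul_assoc]
  rw [e]; exact mono_mem p q hp a b (c+1)

lemma mono_mul_f0 (hp : (p:ℂ) ≠ 0) (a b c : ℕ) :
    mono p q a b c * f0 p q ∈ Q p q := by
  have e0 : mono p q a b c * f0 p q
      = f1 p q ^ a * (f0 p q ^ b * (fm1 p q ^ c * f0 p q)) := by
    simp only [mono, mul_assoc]
  rw [e0, L1]
  simp only [mul_add, mul_smul_comm]
  have e1 : f1 p q ^ a * (f0 p q ^ b * (f0 p q * fm1 p q ^ c)) = mono p q a (b+1) c := by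
    rw [mono, ← mul_assoc (f0 p q ^ b), ← pow_succ]
    simp only [mul_assoc]
  have e2 : f1 p q ^ a * (f0 p q ^ b * fm1 p q ^ c) = mono p q a b c := by
    simp only [mono, mul_assoc]
  rw [e1, e2]
  exact add_mem (Submodule.smul_mem _ _ (mono_mem p q hp a (b+1) c))
    (Submodule.smul_mem _ _ (mono_mem p q hp a b c))

lemma Q_mul_fm1 (hp : (p:ℂ) ≠ 0) {z : QSphere p q} (h : z ∈ Q p q) :
    z * fm1 p q ∈ Q p q := by
  induction h using Submodule.span_induction with
  | mem x hx =>
    obtain ⟨i, rfl⟩ := hx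
    by_cases hc : i.2.1 = 0 ∨ i.1 = 0 ∨ i.2.2 = 0
    · rw [vB, if_pos hc]; exact mono_mul_fm1 p q hp _ _ _
    · rw [vB, if_neg hc, zero_mul]; exact zero_mem _
  | zero => rw [zero_mul]; exact zero_mem _
  | add x y hx hy ihx ihy => rw [add_mul]; exact add_mem ihx ihy
  | smul s x hx ihx => rw [smul_mul_assoc]; exact Submodule.smul_mem _ _ ihx

lemma Q_mul_f0 (hp : (p:ℂ) ≠ 0) {z : QSphere p q} (h : z ∈ Q p q) :
    z * f0 p q ∈ Q p q := by
  induction h using Submodule.span_induction with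
  | mem x hx =>
    obtain ⟨i, rfl⟩ := hx
    by_cases hc : i.2.1 = 0 ∨ i.1 = 0 ∨ i.2.2 = 0
    · rw [vB, if_pos hc]; exact mono_mul_f0 p q hp _ _ _
    · rw [vB, if_neg hc, zero_mul]; exact zero_mem _
  | zero => rw [zero_mul]; exact zero_mem _
  | add x y hx hy ihx ihy => rw [add_mul]; exact add_mem ihx ihy
  | smul s x hx ihx => rw [smul_mul_assoc]; exact Submodule.smul_mem _ _ ihx

lemma mono_mul_f1 (hp : (p:ℂ) ≠ 0) : ∀ c a b, mono p q a b c * f1 p q ∈ Q p q := by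
  intro c
  induction c with
  | zero =>
    intro a b
    have e : mono p q a b 0 * f1 p q = f1 p q ^ a * (f0 p q ^ b * f1 p q) := by
      rw [mono, pow_zero, mul_one, mul_assoc]
    rw [e]
    have h3 := L3 p q b
    refine Submodule.span_induction
      (p := fun z _ => f1 p q ^ a * z ∈ Q p q) ?_ ?_ ?_ ?_ h3
    · rintro x ⟨j, rfl⟩
      have e2 : f1 p q ^ a * (f1 p q * f0 p q ^ j) = mono p q (a+1) j 0 := by
        rw [mono, pow_zero, mul_one, pow_succ]
        simp only [mul_assoc]
      rw [e2]; exact mem_Q_of p q (a+1) j 0 (Or.inr (Or.inr rfl))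
    · simp only [mul_zero]; exact zero_mem _
    · intro x y hx hy ihx ihy
      simp only [mul_add]; exact add_mem ihx ihy
    · intro s x hx ihx
      simp only [mul_smul_comm]; exact Submodule.smul_mem _ _ ihx
  | succ c ih =>
    intro a b
    have e : mono p q a b (c+1) * f1 p q = mono p q a b c * (fm1 p q * f1 p q) := by
      rw [mono, mono, pow_succ]
      simp only [mul_assoc]
    rw [e, id1]
    rw [mul_add, mul_add, mul_smul_comm, mul_smul_comm, mul_smul_comm, mul_one, ← mul_assoc]
    refine add_mem (add_mem ?_ ?_) ?_
    · exact Submodule.smul_mem _ _ (Q_mul_fm1 p q hp (ih a b))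
    · exact Submodule.smul_mem _ _ (mono_mul_f0 p q hp a b c)
    · exact Submodule.smul_mem _ _ (mono_mem p q hp a b c)

lemma Q_mul_f1 (hp : (p:ℂ) ≠ 0) {z : QSphere p q} (h : z ∈ Q p q) :
    z * f1 p q ∈ Q p q := by
  induction h using Submodule.span_induction with
  | mem x hx =>
    obtain ⟨i, rfl⟩ := hx
    by_cases hc : i.2.1 = 0 ∨ i.1 = 0 ∨ i.2.2 = 0
    · rw [vB, if_pos hc]; exact mono_mul_f1 p q hp _ _ _
    · rw [vB, if_neg hc, zero_mul]; exact zero_mem _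
  | zero => rw [zero_mul]; exact zero_mem _
  | add x y hx hy ihx ihy => rw [add_mul]; exact add_mem ihx ihy
  | smul s x hx ihx => rw [smul_mul_assoc]; exact Submodule.smul_mem _ _ ihx

lemma one_mem_Q : (1 : QSphere p q) ∈ Q p q := by
  have h := mem_Q_of p q 0 0 0 (Or.inl rfl)
  simpa [mono] using h

lemma Q_top (hp : (p:ℂ) ≠ 0) (z : QSphere p q) : z ∈ Q p q := by
  obtain ⟨w, rfl⟩ := RingQuot.mkAlgHom_surjective ℂ (sphereRel p q) z
  have main : ∀ w : FreeSphere, ∀ u ∈ Q p q,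
      u * RingQuot.mkAlgHom ℂ (sphereRel p q) w ∈ Q p q := by
    intro w
    refine FreeAlgebra.induction ℂ (Fin 3)
      (motive := fun w => ∀ u ∈ Q p q, u * RingQuot.mkAlgHom ℂ (sphereRel p q) w ∈ Q p q)
      ?_ ?_ ?_ ?_ w
    · intro r u hu
      rw [AlgHom.commutes, Algebra.algebraMap_eq_smul_one, mul_smul_comm, mul_one]
      exact Submodule.smul_mem _ _ hu
    · intro i u hu
      fin_cases i
      · exact Q_mul_f1 p q hp hu
      · exact Q_mul_fm1 p q hp hu
      · exact Q_mul_f0 p q hp hu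
    · intro x y hx hy u hu
      rw [map_mul, ← mul_assoc]
      exact hy _ (hx _ hu)
    · intro x y hx hy u hu
      rw [map_add, mul_add]
      exact add_mem (hx u hu) (hy u hu)
  simpa using main w 1 (one_mem_Q p q)

end Span
end SphereAux

namespace SphereAux

lemma pow_ne_one {t : ℝ} (h0 : 0 < t) (h1 : t < 1) {m : ℕ} (hm : m ≠ 0) :
    (t:ℂ)^m ≠ 1 := by
  have : t^m < 1 := pow_lt_one₀ h0.le h1 hm
  intro h
  have h2 : ((t^m : ℝ) : ℂ) = ((1:ℝ):ℂ) := by push_cast; simpa using h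
  have := Complex.ofReal_injective h2
  linarith

lemma coefP_eq (t : ℝ) (b c k : ℕ) :
    coefP t b c k = (∏ j ∈ Finset.range c, (1 - (t : ℂ) ^ (k - j))) * (1 - (t : ℂ) ^ (k - c)) ^ b :=
  rfl

lemma coefP_zero_of_lt (t : ℝ) (b c k : ℕ) (h : k < c) : coefP t b c k = 0 := by
  rw [coefP_eq]
  apply mul_eq_zero_of_left
  apply Finset.prod_eq_zero (Finset.mem_range.mpr h)
  simp [Nat.sub_self]

lemma prod_ne_zero {t : ℝ} (h0 : 0 < t) (h1 : t < 1) {c k : ℕ} (h : c ≤ k) :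
    (∏ j ∈ Finset.range c, (1 - (t : ℂ) ^ (k - j))) ≠ 0 := by
  apply Finset.prod_ne_zero_iff.mpr
  intro j hj
  rw [Finset.mem_range] at hj
  have hm : k - j ≠ 0 := by omega
  intro hz
  exact pow_ne_one h0 h1 hm (by linear_combination -hz)

lemma coefP_diag_ne_zero {t : ℝ} (h0 : 0 < t) (h1 : t < 1) (c : ℕ) :
    coefP t 0 c c ≠ 0 := by
  rw [coefP_eq, pow_zero, mul_one]
  exact prod_ne_zero h0 h1 le_rfl

/-- Vandermonde-type vanishing lemma -/
lemma vand {r : ℝ} (h0 : 0 < r) (h1 : r < 1) (s : Finset ℕ) (d : ℕ → ℂ) (K : ℕ)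
    (H : ∀ m, K ≤ m → ∑ b ∈ s, d b * (1 - (r:ℂ)^m)^b = 0) : ∀ b ∈ s, d b = 0 := by
  set P : Polynomial ℂ := ∑ b ∈ s, Polynomial.C (d b) * Polynomial.X ^ b with hP
  have hev : ∀ m : ℕ, K ≤ m → P.IsRoot (1 - (r:ℂ)^m) := by
    intro m hm
    have : P.eval (1 - (r:ℂ)^m) = ∑ b ∈ s, d b * (1 - (r:ℂ)^m)^b := by
      rw [hP, Polynomial.eval_finset_sum]
      exact Finset.sum_congr rfl fun b _ => by
        rw [Polynomial.eval_mul, Polynomial.eval_C, Polynomial.eval_pow, Polynomial.eval_X]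
    rw [Polynomial.IsRoot, this, H m hm]
  have hPz : P = 0 := by
    apply Polynomial.eq_zero_of_infinite_isRoot
    apply Set.Infinite.mono (s := (fun m : ℕ => 1 - (r:ℂ)^(m + K)) '' Set.univ)
    · rintro x ⟨m, _, rfl⟩
      exact hev (m + K) (by omega)
    · apply Set.Infinite.image
      · intro m₁ _ m₂ _ he
        have hc : (r:ℂ)^(m₁+K) = (r:ℂ)^(m₂+K) := by linear_combination -he
        have hr : (r:ℝ)^(m₁+K) = (r:ℝ)^(m₂+K) := by
          have := congrArg Complex.re hc
          simpa [← Complex.ofReal_pow] using this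
        have := (pow_right_strictAnti₀ h0 h1).injective hr
        omega
      · exact Set.infinite_univ
  intro b hb
  have : P.coeff b = d b := by
    rw [hP, Polynomial.finset_sum_coeff]
    rw [Finset.sum_eq_single_of_mem b hb]
    · simp
    · intro b' _ hne
      simp [Polynomial.coeff_C_mul, Polynomial.coeff_X_pow, hne, Ne.symm hne]
  rw [hPz] at this
  simpa using this.symm

end SphereAux

namespace SphereAux

/-- disc monomial -/
def dm (t : ℝ) (a b c : ℕ) : QDisc t := (xq t)^a * (xq t * xsq t)^b * (xsq t)^c

lemma rep_dm (t : ℝ) (a b c k : ℕ) :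
    rep t (dm t a b c) (Finsupp.single k 1) = coefP t b c k • Finsupp.single (k - c + a) 1 := by
  rw [dm]; exact mono_eval t a b c k

/-- evaluation functional -/
def Φ (t : ℝ) (k n : ℕ) : QDisc t →ₗ[ℂ] ℂ :=
  (Finsupp.lapply n).comp ((LinearMap.applyₗ (Finsupp.single k (1:ℂ))).comp (rep t).toLinearMap)

lemma Φ_apply (t : ℝ) (k n : ℕ) (z : QDisc t) :
    Φ t k n z = (rep t z (Finsupp.single k 1)) n := rfl

lemma Φ_dm (t : ℝ) (a b c k n : ℕ) :
    Φ t k n (dm t a b c) = coefP t b c k * (if k - c + a = n then 1 else 0) := by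
  rw [Φ_apply, rep_dm, Finsupp.smul_apply, Finsupp.single_apply, smul_eq_mul]

section Indep
variable (p q : ℝ)
variable (F : QSphere p q →ₐ[ℂ] QDisc p × QDisc q)
variable (hF1 : F (f1 p q) = (xq p, xq q))
variable (hFm1 : F (fm1 p q) = (xsq p, xsq q))
variable (hF0 : F (f0 p q) = (xq p * xsq p, 1))

include hF1 hFm1 hF0

lemma F_mono (a b c : ℕ) :
    F (mono p q a b c) = (dm p a b c, dm q a 0 c) := by
  rw [mono, map_mul, map_mul, map_pow, map_pow, map_pow, hF1, hFm1, hF0]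
  simp [Prod.pow_mk, Prod.mk_mul_mk, dm, one_pow, pow_zero]

lemma Fv1 (i : ℕ × ℕ × ℕ) (k n : ℕ) :
    Φ p k n ((F (vB p q i)).1)
      = if (i.2.1 = 0 ∨ i.1 = 0 ∨ i.2.2 = 0)
        then coefP p i.2.1 i.2.2 k * (if k - i.2.2 + i.1 = n then 1 else 0) else 0 := by
  by_cases hP : (i.2.1 = 0 ∨ i.1 = 0 ∨ i.2.2 = 0)
  · rw [if_pos hP, vB, if_pos hP, F_mono p q F hF1 hFm1 hF0, Φ_dm]
  · rw [if_neg hP, vB, if_neg hP, map_zero, Prod.fst_zero, map_zero]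

lemma Fv2 (i : ℕ × ℕ × ℕ) (k n : ℕ) :
    Φ q k n ((F (vB p q i)).2)
      = if (i.2.1 = 0 ∨ i.1 = 0 ∨ i.2.2 = 0)
        then coefP q 0 i.2.2 k * (if k - i.2.2 + i.1 = n then 1 else 0) else 0 := by
  by_cases hP : (i.2.1 = 0 ∨ i.1 = 0 ∨ i.2.2 = 0)
  · rw [if_pos hP, vB, if_pos hP, F_mono p q F hF1 hFm1 hF0, Φ_dm]
  · rw [if_neg hP, vB, if_neg hP, map_zero, Prod.snd_zero, map_zero]


lemma F_injective (hp0 : 0 < p) (hp1 : p < 1) (hq0 : 0 < q) (hq1 : q < 1) :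
    Function.Injective F := by
  have hpC : (p:ℂ) ≠ 0 := Complex.ofReal_ne_zero.mpr (ne_of_gt hp0)
  rw [injective_iff_map_eq_zero]
  intro z hz
  have hzQ : z ∈ Submodule.span ℂ (Set.range (vB p q)) := Q_top p q hpC z
  obtain ⟨cc, hcc⟩ := Finsupp.mem_span_range_iff_exists_finsupp.mp hzQ
  have hFz : (cc.sum fun i a => a • F (vB p q i)) = 0 := by
    have h := congrArg F hcc
    rw [map_finsuppSum] at h
    simp only [map_smul] at h
    rw [hz] at h
    exact h
  have E1 : ∀ k n : ℕ, (∑ i ∈ cc.support, cc i *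
      (if (i.2.1 = 0 ∨ i.1 = 0 ∨ i.2.2 = 0)
        then coefP p i.2.1 i.2.2 k * (if k - i.2.2 + i.1 = n then 1 else 0) else 0)) = 0 := by
    intro k n
    have h := congrArg ((Φ p k n).comp (LinearMap.fst ℂ (QDisc p) (QDisc q))) hFz
    rw [map_finsuppSum, map_zero] at h
    simp only [LinearMap.comp_apply, LinearMap.fst_apply, map_smul, smul_eq_mul] at h
    rw [Finsupp.sum] at h
    refine (Finset.sum_congr rfl fun i _ => ?_).trans h
    rw [Fv1 p q F hF1 hFm1 hF0]
  have E2 : ∀ k n : ℕ, (∑ i ∈ cc.support, cc i *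
      (if (i.2.1 = 0 ∨ i.1 = 0 ∨ i.2.2 = 0)
        then coefP q 0 i.2.2 k * (if k - i.2.2 + i.1 = n then 1 else 0) else 0)) = 0 := by
    intro k n
    have h := congrArg ((Φ q k n).comp (LinearMap.snd ℂ (QDisc p) (QDisc q))) hFz
    rw [map_finsuppSum, map_zero] at h
    simp only [LinearMap.comp_apply, LinearMap.snd_apply, map_smul, smul_eq_mul] at h
    rw [Finsupp.sum] at h
    refine (Finset.sum_congr rfl fun i _ => ?_).trans h
    rw [Fv2 p q F hF1 hFm1 hF0]
  -- Phase 1 : column sums vanish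
  have claim1 : ∀ c₀ a₀ : ℕ,
      (∑ i ∈ cc.support.filter
        (fun i => i.1 = a₀ ∧ i.2.2 = c₀ ∧ (i.2.1 = 0 ∨ i.1 = 0 ∨ i.2.2 = 0)), cc i) = 0 := by
    intro c₀
    induction c₀ using Nat.strong_induction_on with
    | _ c₀ IH =>
      intro a₀
      have h := E2 c₀ a₀
      have step : ∀ i ∈ cc.support, cc i *
          (if (i.2.1 = 0 ∨ i.1 = 0 ∨ i.2.2 = 0)
            then coefP q 0 i.2.2 c₀ * (if c₀ - i.2.2 + i.1 = a₀ then 1 else 0) else 0)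
          = if (i.2.2 ≤ c₀ ∧ c₀ - i.2.2 + i.1 = a₀ ∧ (i.2.1 = 0 ∨ i.1 = 0 ∨ i.2.2 = 0))
            then coefP q 0 i.2.2 c₀ * cc i else 0 := by
        intro i _
        by_cases hP : (i.2.1 = 0 ∨ i.1 = 0 ∨ i.2.2 = 0)
        · by_cases hd : c₀ - i.2.2 + i.1 = a₀
          · by_cases hc : i.2.2 ≤ c₀
            · rw [if_pos hP, if_pos hd, if_pos ⟨hc, hd, hP⟩, mul_one, mul_comm]
            · rw [if_pos hP, if_pos hd, if_neg (by tauto), mul_one,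
                coefP_zero_of_lt q 0 i.2.2 c₀ (by omega), mul_zero]
          · rw [if_pos hP, if_neg hd, if_neg (by tauto), mul_zero, mul_zero]
        · rw [if_neg hP, if_neg (by tauto), mul_zero]
      rw [Finset.sum_congr rfl step, Finset.sum_ite, Finset.sum_const_zero, add_zero] at h
      have maps : ∀ i ∈ cc.support.filter
          (fun i => i.2.2 ≤ c₀ ∧ c₀ - i.2.2 + i.1 = a₀ ∧ (i.2.1 = 0 ∨ i.1 = 0 ∨ i.2.2 = 0)),
          i.2.2 ∈ Finset.range (c₀+1) := by
        intro i hi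
        rw [Finset.mem_filter] at hi
        rw [Finset.mem_range]
        omega
      rw [← Finset.sum_fiberwise_of_maps_to maps] at h
      -- inner sums
      have inner : ∀ c' ∈ Finset.range (c₀+1),
          (∑ i ∈ (cc.support.filter
              (fun i => i.2.2 ≤ c₀ ∧ c₀ - i.2.2 + i.1 = a₀ ∧ (i.2.1 = 0 ∨ i.1 = 0 ∨ i.2.2 = 0))).filter
              (fun i => i.2.2 = c'), coefP q 0 i.2.2 c₀ * cc i)
          = coefP q 0 c' c₀ *
            (∑ i ∈ cc.support.filter
              (fun i => i.1 = a₀ - (c₀ - c') ∧ i.2.2 = c' ∧ (i.2.1 = 0 ∨ i.1 = 0 ∨ i.2.2 = 0))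
              , cc i) * (if c₀ - c' ≤ a₀ then 1 else 0) := by
        intro c' hc'
        rw [Finset.mem_range] at hc'
        rw [Finset.filter_filter]
        by_cases hle : c₀ - c' ≤ a₀
        · rw [if_pos hle, mul_one, Finset.mul_sum]
          have hset : cc.support.filter
              (fun i => (i.2.2 ≤ c₀ ∧ c₀ - i.2.2 + i.1 = a₀ ∧ (i.2.1 = 0 ∨ i.1 = 0 ∨ i.2.2 = 0)) ∧ i.2.2 = c')
              = cc.support.filter
              (fun i => i.1 = a₀ - (c₀ - c') ∧ i.2.2 = c' ∧ (i.2.1 = 0 ∨ i.1 = 0 ∨ i.2.2 = 0)) := by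
            apply Finset.filter_congr
            rintro ⟨a1, b1, c1⟩ _
            simp only []
            constructor
            · rintro ⟨⟨h1, h2, h3⟩, h4⟩
              refine ⟨by omega, h4, h3⟩
            · rintro ⟨h1, h2, h3⟩
              exact ⟨⟨by omega, by omega, h3⟩, h2⟩
          rw [hset]
          apply Finset.sum_congr rfl
          intro i hi
          rw [Finset.mem_filter] at hi
          rw [hi.2.2.1]
        · rw [if_neg hle, mul_zero]
          apply Finset.sum_eq_zero
          intro i hi
          rw [Finset.mem_filter] at hi
          omega
      rw [Finset.sum_congr rfl inner] at h
      rw [Finset.sum_eq_single_of_mem c₀ (Finset.mem_range.mpr (by omega))] at h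
      · rw [Nat.sub_self, Nat.sub_zero, if_pos (Nat.zero_le a₀), mul_one] at h
        rcases mul_eq_zero.mp h with h' | h'
        · exact absurd h' (coefP_diag_ne_zero hq0 hq1 c₀)
        · exact h'
      · intro c' hc'r hne
        have hc' : c' < c₀ := by
          rw [Finset.mem_range] at hc'r
          omega
        rw [IH c' hc' (a₀ - (c₀ - c')), mul_zero, zero_mul]
  have phase1 : ∀ a c : ℕ, 1 ≤ a → 1 ≤ c → cc (a, 0, c) = 0 := by
    intro a c ha hc
    have h := claim1 c a
    have hset : cc.support.filter
        (fun i => i.1 = a ∧ i.2.2 = c ∧ (i.2.1 = 0 ∨ i.1 = 0 ∨ i.2.2 = 0))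
        = cc.support.filter (fun i => i = (a, 0, c)) := by
      apply Finset.filter_congr
      rintro ⟨a1, b1, c1⟩ _
      simp only [Prod.mk.injEq]
      omega
    rw [hset, Finset.filter_eq'] at h
    by_cases hmem : (a, 0, c) ∈ cc.support
    · rw [if_pos hmem, Finset.sum_singleton] at h
      exact h
    · exact Finsupp.notMem_support_iff.mp hmem
  -- Phase 2
  have phase2 : ∀ a b c : ℕ, (a = 0 ∨ c = 0) → cc (a, b, c) = 0 := by
    intro a b c hac
    by_cases hmem : (a, b, c) ∈ cc.support
    case neg => exact Finsupp.notMem_support_iff.mp hmem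
    set K₀ := cc.support.sup (fun i => i.2.2) with hK
    have main : ∀ m, K₀ + 1 ≤ m →
        (∑ i ∈ cc.support.filter (fun i => i.1 = a ∧ i.2.2 = c),
          cc i * (1 - (p:ℂ)^m)^(i.2.1)) = 0 := by
      intro m hm
      have h := E1 (m + c) (m + a)
      have step : ∀ a1 b1 c1 : ℕ, (a1, b1, c1) ∈ cc.support → (cc (a1, b1, c1) *
          (if (b1 = 0 ∨ a1 = 0 ∨ c1 = 0)
            then coefP p b1 c1 (m + c) * (if m + c - c1 + a1 = m + a then 1 else 0) else 0))
          = if (a1 = a ∧ c1 = c)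
            then (∏ j ∈ Finset.range c, (1 - (p:ℂ)^(m + c - j))) *
              (cc (a1, b1, c1) * (1 - (p:ℂ)^m)^b1)
            else 0 := by
        intro a1 b1 c1 hi
        have hile : c1 ≤ K₀ := Finset.le_sup (f := fun i : ℕ × ℕ × ℕ => i.2.2) hi
        by_cases hfib : a1 = a ∧ c1 = c
        · obtain ⟨rfl, rfl⟩ := hfib
          have hP : (b1 = 0 ∨ a1 = 0 ∨ c1 = 0) := by omega
          rw [if_pos hP, if_pos (show _ ∧ _ from ⟨rfl, rfl⟩), if_pos (by omega), mul_one, coefP_eq]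
          have hmc : m + c1 - c1 = m := by omega
          rw [hmc]
          ring
        · rw [if_neg hfib]
          by_cases hP : (b1 = 0 ∨ a1 = 0 ∨ c1 = 0)
          · by_cases hd : m + c - c1 + a1 = m + a
            · have hb0 : b1 = 0 := by omega
              have hz1 : cc (a1, b1, c1) = 0 := by
                rw [hb0]
                exact phase1 a1 c1 (by omega) (by omega)
              rw [hz1, zero_mul]
            · rw [if_pos hP, if_neg hd, mul_zero, mul_zero]
          · rw [if_neg hP, mul_zero]
      rw [Finset.sum_congr rfl (fun i hi => step i.1 i.2.1 i.2.2 hi),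
        Finset.sum_ite, Finset.sum_const_zero, add_zero] at h
      rw [← Finset.mul_sum] at h
      rcases mul_eq_zero.mp h with h' | h'
      · exact absurd h' (prod_ne_zero hp0 hp1 (by omega))
      · exact h'
    have himg : ∀ m, K₀+1 ≤ m →
        (∑ b' ∈ (cc.support.filter (fun i => i.1 = a ∧ i.2.2 = c)).image (fun i => i.2.1),
          cc (a, b', c) * (1-(p:ℂ)^m)^b') = 0 := by
      intro m hm
      rw [Finset.sum_image ?inj]
      case inj =>
        rintro ⟨x1, x2, x3⟩ hx ⟨y1, y2, y3⟩ hy hxy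
        rw [Finset.mem_coe, Finset.mem_filter] at hx hy
        obtain ⟨hx1, hx2⟩ := hx.2
        obtain ⟨hy1, hy2⟩ := hy.2
        simp only [] at hx1 hx2 hy1 hy2 hxy
        subst hx1; subst hx2; subst hy1; subst hy2; subst hxy
        rfl
      rw [← main m hm]
      apply Finset.sum_congr rfl
      rintro ⟨a1, b1, c1⟩ hi
      rw [Finset.mem_filter] at hi
      obtain ⟨h1, h2⟩ := hi.2
      simp only [] at h1 h2
      subst h1; subst h2
      rfl
    have hv := vand hp0 hp1 _ (fun b' => cc (a, b', c)) (K₀+1) himg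
    apply hv
    rw [Finset.mem_image]
    exact ⟨(a, b, c), Finset.mem_filter.mpr ⟨hmem, rfl, rfl⟩, rfl⟩
  -- conclude
  have hall : ∀ i ∈ cc.support, cc i • vB p q i = 0 := by
    rintro ⟨a, b, c⟩ _
    by_cases hP : (b = 0 ∨ a = 0 ∨ c = 0)
    · have hc0 : cc (a, b, c) = 0 := by
        by_cases h2 : a = 0 ∨ c = 0
        · exact phase2 a b c h2
        · push_neg at h2
          have hb : b = 0 := by tauto
          rw [hb]
          exact phase1 a c (by omega) (by omega)
      rw [hc0, zero_smul]
    · rw [vB, if_neg ?_, smul_zero]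
      exact hP
  rw [← hcc, Finsupp.sum]
  exact Finset.sum_eq_zero hall

end Indep
end SphereAux

namespace SphereAux
open LaurentPolynomial

lemma discid (t : ℝ) : xsq t * xq t = (t:ℂ) • (xq t * xsq t) + ((1:ℂ)-(t:ℂ)) • 1 := by
  have h := RingQuot.mkAlgHom_rel ℂ (s := discRel t) ⟨rfl, rfl⟩
  simpa only [map_mul, map_add, map_smul, map_one, xq, xsq] using h

lemma disc_adjoin (t : ℝ) : Algebra.adjoin ℂ ({xq t, xsq t} : Set (QDisc t)) = ⊤ := by
  rw [eq_top_iff]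
  rintro z -
  obtain ⟨w, rfl⟩ := RingQuot.mkAlgHom_surjective ℂ (discRel t) z
  refine FreeAlgebra.induction ℂ (Fin 2)
    (motive := fun w => RingQuot.mkAlgHom ℂ (discRel t) w ∈
      Algebra.adjoin ℂ ({xq t, xsq t} : Set (QDisc t))) ?_ ?_ ?_ ?_ w
  · intro r
    rw [AlgHom.commutes]
    exact Subalgebra.algebraMap_mem _ r
  · intro i
    fin_cases i
    · exact Algebra.subset_adjoin (Or.inl rfl)
    · exact Algebra.subset_adjoin (Or.inr rfl)
  · intro x y hx hy
    rw [map_mul]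
    exact mul_mem hx hy
  · intro x y hx hy
    rw [map_add]
    exact add_mem hx hy

lemma Tsum_zero (c : ℤ →₀ ℂ) (h : (c.sum fun n a => a • (T n : LaurentPolynomial ℂ)) = 0) :
    c = 0 := by
  ext n₀
  have h2 : ∑ n ∈ c.support, (c n • (T n : LaurentPolynomial ℂ)).coeff n₀ = 0 := by
    have := congrArg (fun f : LaurentPolynomial ℂ => f.coeff n₀) h
    simpa [Finsupp.sum, AddMonoidAlgebra.coeff_sum, Finset.sum_apply'] using this
  have h3 : ∀ n ∈ c.support, ((c n • (T n : LaurentPolynomial ℂ)).coeff n₀ : ℂ)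
      = if n = n₀ then c n else 0 := by
    intro n _
    rw [AddMonoidAlgebra.coeff_smul_apply, T_apply, smul_eq_mul]
    split_ifs <;> simp
  rw [Finset.sum_congr rfl h3,
    Finset.sum_ite_eq' c.support n₀ (fun n => c n)] at h2
  by_cases hm : n₀ ∈ c.support
  · rw [if_pos hm] at h2; simpa using h2
  · simpa using Finsupp.notMem_support_iff.mp hm

section Range
variable (p q : ℝ)
variable (F : QSphere p q →ₐ[ℂ] QDisc p × QDisc q)
variable (hF1 : F (f1 p q) = (xq p, xq q))
variable (hFm1 : F (fm1 p q) = (xsq p, xsq q))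
variable (hF0 : F (f0 p q) = (xq p * xsq p, 1))
variable (φp : QDisc p →ₐ[ℂ] LaurentPolynomial ℂ)
variable (hφp1 : φp (xq p) = T 1) (hφp2 : φp (xsq p) = T (-1))
variable (φq : QDisc q →ₐ[ℂ] LaurentPolynomial ℂ)
variable (hφq1 : φq (xq q) = T 1) (hφq2 : φq (xsq q) = T (-1))

/-- generators of the kernel ideal -/
def Kset : Set (QDisc q) := {z | ∃ u v : QDisc q, z = u * ((1:QDisc q) - xq q * xsq q) * v}

/-- Laurent lifts -/
def sI : ℤ → QDisc q := fun n => if 0 ≤ n then xq q ^ n.toNat else xsq q ^ (-n).toNat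

lemma sI_nonneg (n : ℤ) (hn : 0 ≤ n) : sI q n = xq q ^ n.toNat := if_pos hn

lemma sI_nonpos (n : ℤ) (hn : n ≤ 0) : sI q n = xsq q ^ (-n).toNat := by
  rcases eq_or_lt_of_le hn with h | h
  · subst h
    simp [sI]
  · rw [sI, if_neg (by omega)]

lemma M_top : ∀ z : QDisc q, z ∈ Submodule.span ℂ (Set.range (sI q) ∪ Kset q) := by
  set M := Submodule.span ℂ (Set.range (sI q) ∪ Kset q) with hM
  have hone : (1 : QDisc q) ∈ M :=
    Submodule.subset_span (Or.inl ⟨0, by simp [sI]⟩)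
  have hMy : ∀ z ∈ M, z * xq q ∈ M := by
    intro z hz
    induction hz using Submodule.span_induction with
    | mem x hx =>
      rcases hx with ⟨n, rfl⟩ | ⟨u, v, rfl⟩
      · by_cases hn : 0 ≤ n
        · have e : sI q n * xq q = sI q (n+1) := by
            rw [sI_nonneg q n hn, sI_nonneg q (n+1) (by omega),
              show (n+1).toNat = n.toNat + 1 from by omega, pow_succ]
          rw [e]
          exact Submodule.subset_span (Or.inl ⟨n+1, rfl⟩)
        · have hm1 : (-n).toNat = (-(n+1)).toNat + 1 := by omega
          have e : sI q n * xq q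
              = (q:ℂ) • (sI q (n+1) - sI q (n+1) * ((1:QDisc q) - xq q * xsq q) * 1)
                + ((1:ℂ)-(q:ℂ)) • sI q (n+1) := by
            rw [sI_nonpos q n (by omega), sI_nonpos q (n+1) (by omega), hm1, pow_succ,
              mul_assoc, discid]
            simp only [mul_one, mul_sub, mul_add, mul_smul_comm]
            module
          rw [e]
          refine add_mem (Submodule.smul_mem _ _ (sub_mem ?_ ?_)) (Submodule.smul_mem _ _ ?_)
          · exact Submodule.subset_span (Or.inl ⟨n+1, rfl⟩)
          · exact Submodule.subset_span (Or.inr ⟨sI q (n+1), 1, rfl⟩)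
          · exact Submodule.subset_span (Or.inl ⟨n+1, rfl⟩)
      · rw [mul_assoc]
        exact Submodule.subset_span (Or.inr ⟨u, v * xq q, by rw [mul_assoc]⟩)
    | zero => rw [zero_mul]; exact zero_mem _
    | add x y hx hy ihx ihy => rw [add_mul]; exact add_mem ihx ihy
    | smul a x hx ihx => rw [smul_mul_assoc]; exact Submodule.smul_mem _ _ ihx
  have hMs : ∀ z ∈ M, z * xsq q ∈ M := by
    intro z hz
    induction hz using Submodule.span_induction with
    | mem x hx =>
      rcases hx with ⟨n, rfl⟩ | ⟨u, v, rfl⟩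
      · by_cases hn : 1 ≤ n
        · have hm1 : n.toNat = (n-1).toNat + 1 := by omega
          have e : sI q n * xsq q
              = sI q (n-1) - sI q (n-1) * ((1:QDisc q) - xq q * xsq q) * 1 := by
            rw [sI_nonneg q n (by omega), sI_nonneg q (n-1) (by omega), hm1, pow_succ,
              mul_assoc]
            simp only [mul_one, mul_sub]
            abel
          rw [e]
          exact sub_mem (Submodule.subset_span (Or.inl ⟨n-1, rfl⟩))
            (Submodule.subset_span (Or.inr ⟨sI q (n-1), 1, rfl⟩))
        · have e : sI q n * xsq q = sI q (n-1) := by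
            rw [sI_nonpos q n (by omega), sI_nonpos q (n-1) (by omega),
              show (-(n-1)).toNat = (-n).toNat + 1 from by omega, pow_succ]
          rw [e]
          exact Submodule.subset_span (Or.inl ⟨n-1, rfl⟩)
      · rw [mul_assoc]
        exact Submodule.subset_span (Or.inr ⟨u, v * xsq q, by rw [mul_assoc]⟩)
    | zero => rw [zero_mul]; exact zero_mem _
    | add x y hx hy ihx ihy => rw [add_mul]; exact add_mem ihx ihy
    | smul a x hx ihx => rw [smul_mul_assoc]; exact Submodule.smul_mem _ _ ihx
  intro z
  obtain ⟨w, rfl⟩ := RingQuot.mkAlgHom_surjective ℂ (discRel q) z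
  have main : ∀ w : FreeDisc, ∀ u ∈ M, u * RingQuot.mkAlgHom ℂ (discRel q) w ∈ M := by
    intro w
    refine FreeAlgebra.induction ℂ (Fin 2)
      (motive := fun w => ∀ u ∈ M, u * RingQuot.mkAlgHom ℂ (discRel q) w ∈ M) ?_ ?_ ?_ ?_ w
    · intro r u hu
      rw [AlgHom.commutes, Algebra.algebraMap_eq_smul_one, mul_smul_comm, mul_one]
      exact Submodule.smul_mem _ _ hu
    · intro i u hu
      fin_cases i
      · exact hMy u hu
      · exact hMs u hu
    · intro x y hx hy u hu
      rw [map_mul, ← mul_assoc]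
      exact hy _ (hx _ hu)
    · intro x y hx hy u hu
      rw [map_add, mul_add]
      exact add_mem (hx u hu) (hy u hu)
  simpa using main w 1 hone

include hF1 hFm1 hF0 hφp1 hφp2 hφq1 hφq2 in
lemma range_sub (z : QSphere p q) : φp ((F z).1) = φq ((F z).2) := by
  obtain ⟨w, rfl⟩ := RingQuot.mkAlgHom_surjective ℂ (sphereRel p q) z
  refine FreeAlgebra.induction ℂ (Fin 3)
    (motive := fun w => φp ((F (RingQuot.mkAlgHom ℂ (sphereRel p q) w)).1)
      = φq ((F (RingQuot.mkAlgHom ℂ (sphereRel p q) w)).2)) ?_ ?_ ?_ ?_ w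
  · intro r
    have he : (algebraMap ℂ (QDisc p × QDisc q)) r
        = (algebraMap ℂ (QDisc p) r, algebraMap ℂ (QDisc q) r) := rfl
    rw [AlgHom.commutes, AlgHom.commutes, he]
    show φp (algebraMap ℂ (QDisc p) r) = φq (algebraMap ℂ (QDisc q) r)
    rw [AlgHom.commutes, AlgHom.commutes]
  · intro i
    fin_cases i
    · show φp ((F (f1 p q)).1) = φq ((F (f1 p q)).2)
      rw [hF1]
      show φp (xq p) = φq (xq q)
      rw [hφp1, hφq1]
    · show φp ((F (fm1 p q)).1) = φq ((F (fm1 p q)).2)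
      rw [hFm1]
      show φp (xsq p) = φq (xsq q)
      rw [hφp2, hφq2]
    · show φp ((F (f0 p q)).1) = φq ((F (f0 p q)).2)
      rw [hF0]
      show φp (xq p * xsq p) = φq 1
      rw [map_mul, hφp1, hφp2, map_one, ← T_add]
      norm_num
  · intro x y hx hy
    rw [map_mul, map_mul]
    show φp ((F _).1 * (F _).1) = φq ((F _).2 * (F _).2)
    rw [map_mul, map_mul, hx, hy]
  · intro x y hx hy
    rw [map_add, map_add]
    show φp ((F _).1 + (F _).1) = φq ((F _).2 + (F _).2)
    rw [map_add, map_add, hx, hy]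

include hF1 hFm1 in
lemma fst_surj : Function.Surjective ((AlgHom.fst ℂ (QDisc p) (QDisc q)).comp F) := by
  have hr : ((AlgHom.fst ℂ (QDisc p) (QDisc q)).comp F).range = ⊤ := by
    rw [eq_top_iff, ← disc_adjoin p]
    apply Algebra.adjoin_le
    rintro x (rfl | rfl)
    · exact ⟨f1 p q, by
        show ((AlgHom.fst ℂ (QDisc p) (QDisc q)).comp F) (f1 p q) = xq p
        rw [AlgHom.comp_apply, hF1]; rfl⟩
    · exact ⟨fm1 p q, by
        show ((AlgHom.fst ℂ (QDisc p) (QDisc q)).comp F) (fm1 p q) = xsq p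
        rw [AlgHom.comp_apply, hFm1]; rfl⟩
  intro g
  have hg : g ∈ ((AlgHom.fst ℂ (QDisc p) (QDisc q)).comp F).range := by
    rw [hr]; trivial
  exact hg

include hF1 hFm1 in
lemma snd_surj : Function.Surjective ((AlgHom.snd ℂ (QDisc p) (QDisc q)).comp F) := by
  have hr : ((AlgHom.snd ℂ (QDisc p) (QDisc q)).comp F).range = ⊤ := by
    rw [eq_top_iff, ← disc_adjoin q]
    apply Algebra.adjoin_le
    rintro x (rfl | rfl)
    · exact ⟨f1 p q, by
        show ((AlgHom.snd ℂ (QDisc p) (QDisc q)).comp F) (f1 p q) = xq q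
        rw [AlgHom.comp_apply, hF1]; rfl⟩
    · exact ⟨fm1 p q, by
        show ((AlgHom.snd ℂ (QDisc p) (QDisc q)).comp F) (fm1 p q) = xsq q
        rw [AlgHom.comp_apply, hFm1]; rfl⟩
  intro g
  have hg : g ∈ ((AlgHom.snd ℂ (QDisc p) (QDisc q)).comp F).range := by
    rw [hr]; trivial
  exact hg

include hφq1 hφq2 in
lemma ker_to_K (g : QDisc q) (hg : φq g = 0) : g ∈ Submodule.span ℂ (Kset q) := by
  have h := M_top q g
  rw [Submodule.span_union] at h
  obtain ⟨g₁, hg₁, g₂, hg₂, rfl⟩ := Submodule.mem_sup.mp h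
  have hφ2 : ∀ z ∈ Submodule.span ℂ (Kset q), φq z = 0 := by
    intro z hz
    induction hz using Submodule.span_induction with
    | mem x hx =>
      obtain ⟨u, v, rfl⟩ := hx
      rw [map_mul, map_mul, map_sub, map_one, map_mul, hφq1, hφq2]
      have hT : (1:LaurentPolynomial ℂ) - T 1 * T (-1) = 0 := by
        rw [← T_add]
        norm_num
      rw [hT, mul_zero, zero_mul]
    | zero => exact map_zero φq
    | add x y hx hy ihx ihy => rw [map_add, ihx, ihy, add_zero]
    | smul a x hx ihx => rw [map_smul, ihx, smul_zero]
  have hker1 : φq g₁ = 0 := by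
    have h2 := hφ2 g₂ hg₂
    rw [map_add, h2, add_zero] at hg
    exact hg
  obtain ⟨cfun, hcfun⟩ := Finsupp.mem_span_range_iff_exists_finsupp.mp hg₁
  have hT : ∀ n : ℤ, φq (sI q n) = T n := by
    intro n
    by_cases hn : 0 ≤ n
    · rw [sI_nonneg q n hn, map_pow, hφq1, T_pow]
      congr 1
      omega
    · rw [sI_nonpos q n (by omega), map_pow, hφq2, T_pow]
      congr 1
      omega
  have hzero : (cfun.sum fun n a => a • (T n : LaurentPolynomial ℂ)) = 0 := by
    have h3 := congrArg φq hcfun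
    rw [map_finsuppSum] at h3
    simp only [map_smul, hT] at h3
    rw [hker1] at h3
    exact h3
  have hc0 : cfun = 0 := Tsum_zero cfun hzero
  have hg10 : g₁ = 0 := by
    rw [← hcfun, hc0]
    simp
  rw [hg10, zero_add]
  exact hg₂

include hF1 hFm1 hF0 hφp1 hφp2 hφq1 hφq2 in
lemma range_eq (hq0 : 0 < q) :
    Set.range ⇑F = {fg : QDisc p × QDisc q | φp fg.1 = φq fg.2} := by
  have hqC : (q:ℂ) ≠ 0 := Complex.ofReal_ne_zero.mpr (ne_of_gt hq0)
  apply Set.Subset.antisymm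
  · rintro _ ⟨z, rfl⟩
    exact range_sub p q F hF1 hFm1 hF0 φp hφp1 hφp2 φq hφq1 hφq2 z
  · rintro ⟨f, g⟩ hfg
    obtain ⟨z₁, hz₁⟩ := fst_surj p q F hF1 hFm1 f
    have hz₁' : (F z₁).1 = f := hz₁
    have hker : φq (g - (F z₁).2) = 0 := by
      rw [map_sub]
      have h1 := range_sub p q F hF1 hFm1 hF0 φp hφp1 hφp2 φq hφq1 hφq2 z₁
      have hfg' : φp f = φq g := hfg
      rw [← hz₁', h1] at hfg'
      rw [← hfg', sub_self]
    have hK := ker_to_K q φq hφq1 hφq2 (g - (F z₁).2) hker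
    have hW : ∀ h ∈ Submodule.span ℂ (Kset q), ((0 : QDisc p), h) ∈ Set.range ⇑F := by
      intro h hh
      induction hh using Submodule.span_induction with
      | mem x hx =>
        obtain ⟨u, v, rfl⟩ := hx
        obtain ⟨zu, hzu0⟩ := snd_surj p q F hF1 hFm1 u
        obtain ⟨zv, hzv0⟩ := snd_surj p q F hF1 hFm1 v
        have hzu : (F zu).2 = u := hzu0
        have hzv : (F zv).2 = v := hzv0
        have hbase : ((0 : QDisc p), (1:QDisc q) - xq q * xsq q) ∈ Set.range ⇑F := by
          refine ⟨(q:ℂ)⁻¹ • ((p:ℂ) • f0 p q + ((1:ℂ)-(p:ℂ)) • 1 - fm1 p q * f1 p q), ?_⟩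
          rw [map_smul, map_sub, map_add, map_smul, map_smul, map_one, map_mul, hF0, hFm1, hF1]
          have hxs := discid p
          have hys := discid q
          apply Prod.ext
          · show (q:ℂ)⁻¹ • ((p:ℂ) • (xq p * xsq p) + ((1:ℂ)-(p:ℂ)) • 1 - xsq p * xq p) = 0
            rw [hxs]
            simp
          · show (q:ℂ)⁻¹ • ((p:ℂ) • (1:QDisc q) + ((1:ℂ)-(p:ℂ)) • 1 - xsq q * xq q)
              = (1:QDisc q) - xq q * xsq q
            rw [hys]
            rw [smul_sub, smul_add, smul_smul, smul_smul, smul_add, smul_smul, smul_smul]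
            match_scalars <;> field_simp <;> ring
        obtain ⟨zb, hzb⟩ := hbase
        refine ⟨zu * zb * zv, ?_⟩
        rw [map_mul, map_mul, hzb]
        apply Prod.ext
        · show (F zu).1 * 0 * (F zv).1 = 0
          rw [mul_zero, zero_mul]
        · show (F zu).2 * ((1:QDisc q) - xq q * xsq q) * (F zv).2 = _
          rw [hzu, hzv]
      | zero => exact ⟨0, by simp; rfl⟩
      | add x y hx hy ihx ihy =>
        obtain ⟨zx, hzx⟩ := ihx
        obtain ⟨zy, hzy⟩ := ihy
        refine ⟨zx + zy, ?_⟩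
        rw [map_add, hzx, hzy, Prod.mk_add_mk, add_zero]
      | smul a x hx ihx =>
        obtain ⟨zx, hzx⟩ := ihx
        refine ⟨a • zx, ?_⟩
        rw [map_smul, hzx, Prod.smul_mk, smul_zero]
    obtain ⟨z₂, hz₂⟩ := hW _ hK
    refine ⟨z₁ + z₂, ?_⟩
    rw [map_add, hz₂]
    apply Prod.ext
    · show (F z₁).1 + 0 = f
      rw [add_zero, hz₁']
    · show (F z₁).2 + (g - (F z₁).2) = g
      abel


end Range
end SphereAux

/-- The canonical map F : P(S²_{pqφ}) → P(D_p) × P(D_q) (sending f₁ to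
(x, y), f₋₁ to (x*, y*) and f₀ to (x x*, 1)) is injective, and its image is the fibered
product P(D_p) ⊕_φ P(D_q) = {(f, g) : φ_p(f) = φ_q(g)}, where φ_p, φ_q are the
homomorphisms to the Laurent polynomial algebra ℂ[a, a⁻¹] sending the disc generators to
a and a⁻¹.  In particular P(S²_{pqφ}) ≅ P(D_p) ⊕_φ P(D_q). -/
theorem sphere_iso_glued_discs (p q : ℝ) (hp0 : 0 < p) (hp1 : p < 1)
    (hq0 : 0 < q) (hq1 : q < 1)
    (φp : QDisc p →ₐ[ℂ] LaurentPolynomial ℂ)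
    (hφp1 : φp (xq p) = LaurentPolynomial.T 1)
    (hφp2 : φp (xsq p) = LaurentPolynomial.T (-1))
    (φq : QDisc q →ₐ[ℂ] LaurentPolynomial ℂ)
    (hφq1 : φq (xq q) = LaurentPolynomial.T 1)
    (hφq2 : φq (xsq q) = LaurentPolynomial.T (-1))
    (F : QSphere p q →ₐ[ℂ] QDisc p × QDisc q)
    (hF1 : F (f1 p q) = (xq p, xq q))
    (hFm1 : F (fm1 p q) = (xsq p, xsq q))
    (hF0 : F (f0 p q) = (xq p * xsq p, 1)) :
    Function.Injective F ∧
    Set.range F = {fg : QDisc p × QDisc q | φp fg.1 = φq fg.2} := by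
  constructor
  · exact SphereAux.F_injective p q F hF1 hFm1 hF0 hp0 hp1 hq0 hq1
  · exact SphereAux.range_eq p q F hF1 hFm1 hF0 φp hφp1 hφp2 φq hφq1 hφq2 hq0
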